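/- Let f : D → {0,1} be a function on a finite poset D that is ε-far from monotone (at least ε|D| values must be changed to make f monotone). Then any maximal matching M in the violation graph of f (the graph on D with an edge {x,y} whenever x < y, f(x)=1, f(y)=0) satisfies |M| ≥ ε|D|/2. -/
import Mathlib


/-- If `f : D → {0,1}` on a finite poset is `ε`-far from monotone, then any maximal
matching `M` of violated pairs (`x < y`, `f x = 1`, `f y = 0`) has `|M| ≥ ε|D|/2`. -/
theorem stmt_6 {D : Type*} [Fintype D] [PartialOrder D] (f : D → Bool) (ε : ℝ)
    (hfar : ∀ g : D → Bool, Monotone g →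
      ε * (Fintype.card D : ℝ) ≤ ((Finset.univ.filter fun x => f x ≠ g x).card : ℝ))
    (M : Finset (D × D))
    (hviol : ∀ p ∈ M, p.1 < p.2 ∧ f p.1 = true ∧ f p.2 = false)
    (hmatch : ∀ p ∈ M, ∀ q ∈ M, p ≠ q →
      p.1 ≠ q.1 ∧ p.1 ≠ q.2 ∧ p.2 ≠ q.1 ∧ p.2 ≠ q.2)
    (hmaximal : ∀ x y : D, x < y → f x = true → f y = false →
      ∃ p ∈ M, p.1 = x ∨ p.2 = x ∨ p.1 = y ∨ p.2 = y) :
    ε * (Fintype.card D : ℝ) / 2 ≤ (M.card : ℝ) := by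
  classical
  -- C : set of endpoints of M (a vertex cover of the violation graph)
  set C : Finset D := M.image Prod.fst ∪ M.image Prod.snd with hC
  have hmemC : ∀ x, (∃ p ∈ M, p.1 = x ∨ p.2 = x) → x ∈ C := by
    intro x ⟨p, hp, h⟩
    rcases h with h | h
    · exact Finset.mem_union_left _ (Finset.mem_image.2 ⟨p, hp, h⟩)
    · exact Finset.mem_union_right _ (Finset.mem_image.2 ⟨p, hp, h⟩)
  -- the repaired function
  set g : D → Bool := fun x => decide (∃ z, z ∉ C ∧ z ≤ x ∧ f z = true) with hg
  have hgiff : ∀ x, g x = true ↔ ∃ z, z ∉ C ∧ z ≤ x ∧ f z = true := by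
    intro x; simp [hg]
  have hmono : Monotone g := by
    intro a b hab
    rcases Bool.eq_false_or_eq_true (g a) with h | h
    swap
    · simp [h]
    · have := (hgiff a).1 h
      rcases this with ⟨z, hz1, hz2, hz3⟩
      have : g b = true := (hgiff b).2 ⟨z, hz1, le_trans hz2 hab, hz3⟩
      simp [h, this]
  -- g agrees with f outside C
  have hagree : ∀ x, x ∉ C → g x = f x := by
    intro x hx
    rcases Bool.eq_false_or_eq_true (f x) with h | h
    · have : g x = true := (hgiff x).2 ⟨x, hx, le_refl x, h⟩
      rw [this, h]
    · -- f x = false; show g x = false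
      rcases Bool.eq_false_or_eq_true (g x) with h' | h'
      swap
      · rw [h, h']
      · exfalso
        rcases (hgiff x).1 h' with ⟨z, hz1, hz2, hz3⟩
        have hne : z ≠ x := by rintro rfl; rw [h] at hz3; exact absurd hz3 (by simp)
        have hlt : z < x := lt_of_le_of_ne hz2 hne
        rcases hmaximal z x hlt hz3 h with ⟨p, hp, hcase⟩
        rcases hcase with hc | hc | hc | hc
        · exact hz1 (hmemC z ⟨p, hp, Or.inl hc⟩)
        · exact hz1 (hmemC z ⟨p, hp, Or.inr hc⟩)
        · exact hx (hmemC x ⟨p, hp, Or.inl hc⟩)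
        · exact hx (hmemC x ⟨p, hp, Or.inr hc⟩)
  -- difference set is contained in C
  have hsub : (Finset.univ.filter fun x => f x ≠ g x) ⊆ C := by
    intro x hx
    rw [Finset.mem_filter] at hx
    by_contra hxc
    exact hx.2 (hagree x hxc).symm
  have hcard1 : (Finset.univ.filter fun x => f x ≠ g x).card ≤ C.card :=
    Finset.card_le_card hsub
  have hcard2 : C.card ≤ 2 * M.card := by
    calc C.card ≤ (M.image Prod.fst).card + (M.image Prod.snd).card :=
          Finset.card_union_le _ _
      _ ≤ M.card + M.card :=
          Nat.add_le_add (Finset.card_image_le) (Finset.card_image_le)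
      _ = 2 * M.card := by ring
  have h1 := hfar g hmono
  have h2 : ((Finset.univ.filter fun x => f x ≠ g x).card : ℝ) ≤ 2 * (M.card : ℝ) := by
    have := le_trans hcard1 hcard2
    exact_mod_cast this
  linarith
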